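/- Let d ≥ 1 and 4/d < p < q < 4/(d-1). Define g(t,a,b,c) = a·t² − b·t^{pd/2} − c·t^{qd/2} and f(a,b,c) = sup_{t>0} g(t,a,b,c). Then for any fixed (a,b,c) ∈ (0,∞)³, the supremum is attained at a unique t₀ > 0 with ∂_t g(t₀,a,b,c) = 0 and ∂_t² g(t₀,a,b,c) < 0, and the function f is continuous on (0,∞)³. -/

import Mathlib

open Set

private lemma aux_deriv (P Q a b c t : ℝ) (hP : 1 ≤ P) (hQ : 1 ≤ Q) :
    HasDerivAt (fun t : ℝ => a * t ^ 2 - b * t ^ P - c * t ^ Q)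
      (2 * a * t - b * (P * t ^ (P - 1)) - c * (Q * t ^ (Q - 1))) t := by
  have h1 : HasDerivAt (fun t : ℝ => t ^ P) (P * t ^ (P - 1)) t :=
    Real.hasDerivAt_rpow_const (Or.inr hP)
  have h2 : HasDerivAt (fun t : ℝ => t ^ Q) (Q * t ^ (Q - 1)) t :=
    Real.hasDerivAt_rpow_const (Or.inr hQ)
  have h0 : HasDerivAt (fun t : ℝ => t ^ 2) (2 * t) t := by
    simpa using hasDerivAt_pow 2 t
  have := ((h0.const_mul a).sub (h1.const_mul b)).sub (h2.const_mul c)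
  exact this.congr_deriv (by ring)

private lemma aux_small (P Q a b c : ℝ) (hP : 2 < P) (hQ : 2 < Q) (ha : 0 < a) :
    ∃ t : ℝ, 0 < t ∧ 0 < a * t ^ 2 - b * t ^ P - c * t ^ Q := by
  have h : Filter.Tendsto (fun t : ℝ => b * t ^ (P - 2) + c * t ^ (Q - 2))
      (nhdsWithin 0 (Ioi 0)) (nhds 0) := by
    have h1 : Filter.Tendsto (fun t : ℝ => t ^ (P - 2)) (nhdsWithin 0 (Ioi 0)) (nhds 0) := by
      have := (Real.continuousAt_rpow_const 0 (P - 2) (Or.inr (by linarith))).continuousWithinAt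
        (s := Ioi (0:ℝ))
      simpa [ContinuousWithinAt, Real.zero_rpow (by linarith : P - 2 ≠ 0)] using this
    have h2 : Filter.Tendsto (fun t : ℝ => t ^ (Q - 2)) (nhdsWithin 0 (Ioi 0)) (nhds 0) := by
      have := (Real.continuousAt_rpow_const 0 (Q - 2) (Or.inr (by linarith))).continuousWithinAt
        (s := Ioi (0:ℝ))
      simpa [ContinuousWithinAt, Real.zero_rpow (by linarith : Q - 2 ≠ 0)] using this
    simpa using (h1.const_mul b).add (h2.const_mul c)
  have hev : ∀ᶠ t in nhdsWithin 0 (Ioi (0:ℝ)), b * t ^ (P - 2) + c * t ^ (Q - 2) < a :=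
    h.eventually_lt_const ha
  obtain ⟨t, ht, hlt⟩ := (hev.and self_mem_nhdsWithin).exists
  refine ⟨t, hlt, ?_⟩
  have htp : (0:ℝ) < t := hlt
  have e1 : t ^ P = t ^ (2:ℕ) * t ^ (P - 2) := by
    rw [← Real.rpow_natCast t 2, ← Real.rpow_add htp]; norm_num
  have e2 : t ^ Q = t ^ (2:ℕ) * t ^ (Q - 2) := by
    rw [← Real.rpow_natCast t 2, ← Real.rpow_add htp]; norm_num
  have ht2 : (0:ℝ) < t ^ (2:ℕ) := by positivity
  have : a * t ^ 2 - b * t ^ P - c * t ^ Q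
      = t ^ (2:ℕ) * (a - (b * t ^ (P - 2) + c * t ^ (Q - 2))) := by
    rw [e1, e2]; ring
  rw [this]
  exact mul_pos ht2 (by linarith)

private lemma aux_T (P Q A B : ℝ) (hP : 2 < P) (hB : 0 < B) :
    ∃ T : ℝ, 0 < T ∧ ∀ t, T ≤ t → ∀ a b c : ℝ, a ≤ A → B ≤ b → 0 ≤ c →
      a * t ^ 2 - b * t ^ P - c * t ^ Q ≤ 0 := by
  have h : Filter.Tendsto (fun t : ℝ => t ^ (P - 2)) Filter.atTop Filter.atTop :=
    tendsto_rpow_atTop (by linarith)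
  have hev : ∀ᶠ t in Filter.atTop, A / B ≤ t ^ (P - 2) := h.eventually_ge_atTop _
  obtain ⟨T, hT⟩ := hev.exists_forall_of_atTop
  refine ⟨max T 1, by positivity, fun t ht a b c haA hBb hc => ?_⟩
  have ht1 : (1:ℝ) ≤ t := le_trans (le_max_right _ _) ht
  have htp : (0:ℝ) < t := by linarith
  have hAB : A / B ≤ t ^ (P - 2) := hT t (le_trans (le_max_left _ _) ht)
  have key : A ≤ b * t ^ (P - 2) := by
    calc A = B * (A / B) := by field_simp
    _ ≤ B * t ^ (P - 2) := mul_le_mul_of_nonneg_left hAB hB.le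
    _ ≤ b * t ^ (P - 2) := mul_le_mul_of_nonneg_right hBb (Real.rpow_nonneg htp.le _)
  have e1 : t ^ P = t ^ (2:ℕ) * t ^ (P - 2) := by
    rw [← Real.rpow_natCast t 2, ← Real.rpow_add htp]; norm_num
  have hcQ : 0 ≤ c * t ^ Q := mul_nonneg hc (Real.rpow_nonneg htp.le _)
  have ht2 : (0:ℝ) ≤ t ^ (2:ℕ) := by positivity
  have : a * t ^ 2 - b * t ^ P ≤ 0 := by
    rw [e1]
    have hab : a ≤ b * t ^ (P - 2) := le_trans haA key
    calc a * t ^ (2:ℕ) - b * (t ^ (2:ℕ) * t ^ (P - 2))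
        = t ^ (2:ℕ) * (a - b * t ^ (P - 2)) := by ring
    _ ≤ 0 := mul_nonpos_of_nonneg_of_nonpos ht2 (by linarith)
  linarith

private lemma aux_cont (P Q a b c : ℝ) (hP : 2 < P) (hQ : 2 < Q) :
    Continuous (fun t : ℝ => a * t ^ 2 - b * t ^ P - c * t ^ Q) := by
  have h1 : Continuous fun t : ℝ => t ^ P := continuous_iff_continuousAt.mpr fun x =>
    Real.continuousAt_rpow_const x P (Or.inr (by linarith))
  have h2 : Continuous fun t : ℝ => t ^ Q := continuous_iff_continuousAt.mpr fun x =>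
    Real.continuousAt_rpow_const x Q (Or.inr (by linarith))
  exact ((continuous_const.mul (continuous_pow 2)).sub (continuous_const.mul h1)).sub
    (continuous_const.mul h2)

private lemma aux_max (P Q a b c : ℝ) (hP : 2 < P) (hQ : 2 < Q)
    (ha : 0 < a) (hb : 0 < b) (hc : 0 < c) :
    ∃ t0 : ℝ, 0 < t0 ∧
      (∀ t ∈ Ioi (0:ℝ), a * t ^ 2 - b * t ^ P - c * t ^ Q ≤
        a * t0 ^ 2 - b * t0 ^ P - c * t0 ^ Q) ∧
      0 < a * t0 ^ 2 - b * t0 ^ P - c * t0 ^ Q := by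
  obtain ⟨T, hTpos, hT⟩ := aux_T P Q a b hP hb
  obtain ⟨ts, htspos, hts⟩ := aux_small P Q a b c hP hQ ha
  have htsT : ts ≤ T := by
    by_contra h
    have := hT ts (le_of_lt (lt_of_not_ge h)) a b c le_rfl le_rfl hc.le
    linarith
  obtain ⟨t0, ht0mem, ht0max⟩ := (isCompact_Icc (a := (0:ℝ)) (b := T)).exists_isMaxOn
    (nonempty_Icc.mpr hTpos.le) ((aux_cont P Q a b c hP hQ).continuousOn)
  have hpos : 0 < a * t0 ^ 2 - b * t0 ^ P - c * t0 ^ Q :=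
    lt_of_lt_of_le hts (ht0max ⟨htspos.le, htsT⟩)
  have hG0 : a * (0:ℝ) ^ 2 - b * (0:ℝ) ^ P - c * (0:ℝ) ^ Q = 0 := by
    simp [Real.zero_rpow (by linarith : P ≠ 0), Real.zero_rpow (by linarith : Q ≠ 0)]
  have ht0pos : 0 < t0 := by
    rcases eq_or_lt_of_le ht0mem.1 with h | h
    · exfalso; rw [← h] at hpos; rw [hG0] at hpos; exact lt_irrefl 0 hpos
    · exact h
  refine ⟨t0, ht0pos, fun t ht => ?_, hpos⟩
  rcases le_or_gt t T with h | h
  · exact ht0max ⟨le_of_lt ht, h⟩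
  · have := hT t h.le a b c le_rfl le_rfl hc.le
    linarith

private lemma aux_crit (P Q a b c t1 : ℝ) (hP : 2 < P) (hQ : 2 < Q) (ht1 : 0 < t1)
    (hmax : ∀ t ∈ Ioi (0:ℝ), a * t ^ 2 - b * t ^ P - c * t ^ Q ≤
      a * t1 ^ 2 - b * t1 ^ P - c * t1 ^ Q) :
    2 * a = b * P * t1 ^ (P - 2) + c * Q * t1 ^ (Q - 2) := by
  have hloc : IsLocalMax (fun t : ℝ => a * t ^ 2 - b * t ^ P - c * t ^ Q) t1 :=
    IsMaxOn.isLocalMax (fun t ht => hmax t ht) (Ioi_mem_nhds ht1)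
  have hd := hloc.hasDerivAt_eq_zero (aux_deriv P Q a b c t1 (by linarith) (by linarith))
  have e1 : t1 ^ (P - 1) = t1 ^ (P - 2) * t1 := by
    rw [show P - 1 = (P - 2) + 1 by ring, Real.rpow_add ht1, Real.rpow_one]
  have e2 : t1 ^ (Q - 1) = t1 ^ (Q - 2) * t1 := by
    rw [show Q - 1 = (Q - 2) + 1 by ring, Real.rpow_add ht1, Real.rpow_one]
  rw [e1, e2] at hd
  have h2 : (2 * a - (b * P * t1 ^ (P - 2) + c * Q * t1 ^ (Q - 2))) * t1 = 0 := by
    linear_combination hd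
  rcases mul_eq_zero.mp h2 with h | h
  · linarith
  · exact absurd h (ne_of_gt ht1)

private lemma aux_uniq (P Q a b c t0 t1 : ℝ) (hP : 2 < P) (hQ : 2 < Q)
    (ht0 : 0 < t0) (ht1 : 0 < t1) (hb : 0 < b) (hc : 0 < c)
    (h0 : 2 * a = b * P * t0 ^ (P - 2) + c * Q * t0 ^ (Q - 2))
    (h1 : 2 * a = b * P * t1 ^ (P - 2) + c * Q * t1 ^ (Q - 2)) : t1 = t0 := by
  have hbP : 0 < b * P := by positivity
  have hcQ : 0 < c * Q := by positivity
  rcases lt_trichotomy t1 t0 with h | h | h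
  · exfalso
    have hx := Real.rpow_lt_rpow ht1.le h (by linarith : (0:ℝ) < P - 2)
    have hy := Real.rpow_lt_rpow ht1.le h (by linarith : (0:ℝ) < Q - 2)
    have := mul_lt_mul_of_pos_left hx hbP
    have := mul_lt_mul_of_pos_left hy hcQ
    linarith
  · exact h
  · exfalso
    have hx := Real.rpow_lt_rpow ht0.le h (by linarith : (0:ℝ) < P - 2)
    have hy := Real.rpow_lt_rpow ht0.le h (by linarith : (0:ℝ) < Q - 2)
    have := mul_lt_mul_of_pos_left hx hbP
    have := mul_lt_mul_of_pos_left hy hcQ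
    linarith

private lemma aux_deriv2 (P Q a b c t0 : ℝ) (hP : 2 < P) (hQ : 2 < Q) (ht0 : 0 < t0)
    (h0 : 2 * a = b * P * t0 ^ (P - 2) + c * Q * t0 ^ (Q - 2))
    (hb : 0 < b) (hc : 0 < c) :
    deriv (deriv (fun t : ℝ => a * t ^ 2 - b * t ^ P - c * t ^ Q)) t0 < 0 := by
  have hderiv : deriv (fun t : ℝ => a * t ^ 2 - b * t ^ P - c * t ^ Q)
      = fun t => 2 * a * t - b * (P * t ^ (P - 1)) - c * (Q * t ^ (Q - 1)) :=
    funext fun t => (aux_deriv P Q a b c t (by linarith) (by linarith)).deriv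
  rw [hderiv]
  have hd1 : HasDerivAt (fun t : ℝ => t ^ (P - 1)) ((P - 1) * t0 ^ (P - 1 - 1)) t0 :=
    Real.hasDerivAt_rpow_const (Or.inl (ne_of_gt ht0))
  have hd2 : HasDerivAt (fun t : ℝ => t ^ (Q - 1)) ((Q - 1) * t0 ^ (Q - 1 - 1)) t0 :=
    Real.hasDerivAt_rpow_const (Or.inl (ne_of_gt ht0))
  have hid : HasDerivAt (fun t : ℝ => 2 * a * t) (2 * a) t0 := by
    simpa using (hasDerivAt_id t0).const_mul (2 * a)
  have hφ : HasDerivAt (fun t : ℝ => 2 * a * t - b * (P * t ^ (P - 1)) - c * (Q * t ^ (Q - 1)))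
      (2 * a - b * (P * ((P - 1) * t0 ^ (P - 1 - 1))) - c * (Q * ((Q - 1) * t0 ^ (Q - 1 - 1))))
      t0 := (hid.sub ((hd1.const_mul P).const_mul b)).sub ((hd2.const_mul Q).const_mul c)
  rw [hφ.deriv, show P - 1 - 1 = P - 2 by ring, show Q - 1 - 1 = Q - 2 by ring]
  have hx : 0 < t0 ^ (P - 2) := Real.rpow_pos_of_pos ht0 _
  have hy : 0 < t0 ^ (Q - 2) := Real.rpow_pos_of_pos ht0 _
  nlinarith [mul_pos (mul_pos (show (0:ℝ) < b * P by positivity) hx) (show (0:ℝ) < P - 2 by linarith),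
    mul_pos (mul_pos (show (0:ℝ) < c * Q by positivity) hy) (show (0:ℝ) < Q - 2 by linarith)]

private lemma aux_bdd (P Q a b c : ℝ) (hP : 2 < P) (hQ : 2 < Q)
    (ha : 0 < a) (hb : 0 < b) (hc : 0 < c) :
    BddAbove ((fun t : ℝ => a * t ^ 2 - b * t ^ P - c * t ^ Q) '' Ioi 0) := by
  obtain ⟨t0, _, hmax, _⟩ := aux_max P Q a b c hP hQ ha hb hc
  exact ⟨a * t0 ^ 2 - b * t0 ^ P - c * t0 ^ Q, by rintro y ⟨t, ht, rfl⟩; exact hmax t ht⟩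

private lemma aux_pos (P Q a b c : ℝ) (hP : 2 < P) (hQ : 2 < Q)
    (ha : 0 < a) (hb : 0 < b) (hc : 0 < c) :
    0 < sSup ((fun t : ℝ => a * t ^ 2 - b * t ^ P - c * t ^ Q) '' Ioi 0) := by
  obtain ⟨ts, htspos, hts⟩ := aux_small P Q a b c hP hQ ha
  exact lt_of_lt_of_le hts (le_csSup (aux_bdd P Q a b c hP hQ ha hb hc) ⟨ts, htspos, rfl⟩)

private lemma aux_le (P Q T a b c a' b' c' : ℝ) (hP : 2 < P) (hQ : 2 < Q) (hT : 0 < T)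
    (ha' : 0 < a') (hb' : 0 < b') (hc' : 0 < c')
    (hTa : ∀ t : ℝ, T ≤ t → a * t ^ 2 - b * t ^ P - c * t ^ Q ≤ 0) :
    sSup ((fun t : ℝ => a * t ^ 2 - b * t ^ P - c * t ^ Q) '' Ioi 0) ≤
      sSup ((fun t : ℝ => a' * t ^ 2 - b' * t ^ P - c' * t ^ Q) '' Ioi 0) +
        (|a - a'| * T ^ 2 + |b - b'| * T ^ P + |c - c'| * T ^ Q) := by
  have hbdd' := aux_bdd P Q a' b' c' hP hQ ha' hb' hc'
  have hpos' := aux_pos P Q a' b' c' hP hQ ha' hb' hc'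
  have hne : ((fun t : ℝ => a * t ^ 2 - b * t ^ P - c * t ^ Q) '' Ioi 0).Nonempty :=
    ⟨_, ⟨1, mem_Ioi.mpr one_pos, rfl⟩⟩
  have hE : 0 ≤ |a - a'| * T ^ 2 + |b - b'| * T ^ P + |c - c'| * T ^ Q := by positivity
  refine csSup_le hne ?_
  rintro y ⟨t, ht, rfl⟩
  show a * t ^ 2 - b * t ^ P - c * t ^ Q ≤ _
  have htpos : (0:ℝ) < t := ht
  rcases le_or_gt t T with hle | hlt
  · have hb1 : (a - a') * t ^ 2 ≤ |a - a'| * T ^ 2 :=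
      mul_le_mul (le_abs_self _) (by nlinarith) (by positivity) (abs_nonneg _)
    have hb2 : -((b - b') * t ^ P) ≤ |b - b'| * T ^ P := by
      rw [neg_mul_eq_neg_mul]
      exact mul_le_mul (neg_le_abs _) (Real.rpow_le_rpow htpos.le hle (by linarith))
        (Real.rpow_nonneg htpos.le _) (abs_nonneg _)
    have hb3 : -((c - c') * t ^ Q) ≤ |c - c'| * T ^ Q := by
      rw [neg_mul_eq_neg_mul]
      exact mul_le_mul (neg_le_abs _) (Real.rpow_le_rpow htpos.le hle (by linarith))
        (Real.rpow_nonneg htpos.le _) (abs_nonneg _)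
    have hmem : a' * t ^ 2 - b' * t ^ P - c' * t ^ Q ≤
        sSup ((fun t : ℝ => a' * t ^ 2 - b' * t ^ P - c' * t ^ Q) '' Ioi 0) :=
      le_csSup hbdd' ⟨t, ht, rfl⟩
    have hid : a * t ^ 2 - b * t ^ P - c * t ^ Q
        = (a' * t ^ 2 - b' * t ^ P - c' * t ^ Q)
          + ((a - a') * t ^ 2 + (-((b - b') * t ^ P)) + (-((c - c') * t ^ Q))) := by ring
    linarith [hid ▸ le_refl (a * t ^ 2 - b * t ^ P - c * t ^ Q)]
  · have := hTa t hlt.le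
    linarith

private lemma part1 (P Q : ℝ) (hP : 2 < P) (hQ : 2 < Q)
    (a b c : ℝ) (ha : 0 < a) (hb : 0 < b) (hc : 0 < c) :
    ∃ t0 : ℝ, 0 < t0 ∧
      (∀ t ∈ Ioi (0 : ℝ),
        a * t ^ 2 - b * t ^ P - c * t ^ Q ≤ a * t0 ^ 2 - b * t0 ^ P - c * t0 ^ Q) ∧
      a * t0 ^ 2 - b * t0 ^ P - c * t0 ^ Q =
        sSup ((fun t : ℝ => a * t ^ 2 - b * t ^ P - c * t ^ Q) '' Ioi 0) ∧
      deriv (fun t : ℝ => a * t ^ 2 - b * t ^ P - c * t ^ Q) t0 = 0 ∧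
      deriv (deriv (fun t : ℝ => a * t ^ 2 - b * t ^ P - c * t ^ Q)) t0 < 0 ∧
      (∀ t1 ∈ Ioi (0 : ℝ),
        (∀ t ∈ Ioi (0 : ℝ),
          a * t ^ 2 - b * t ^ P - c * t ^ Q ≤ a * t1 ^ 2 - b * t1 ^ P - c * t1 ^ Q) →
        t1 = t0) := by
  obtain ⟨t0, ht0pos, hmax, hval⟩ := aux_max P Q a b c hP hQ ha hb hc
  have hcrit := aux_crit P Q a b c t0 hP hQ ht0pos hmax
  refine ⟨t0, ht0pos, hmax, ?_, ?_, ?_, ?_⟩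
  · refine le_antisymm (le_csSup (aux_bdd P Q a b c hP hQ ha hb hc) ⟨t0, ht0pos, rfl⟩) ?_
    refine csSup_le ⟨_, ⟨1, mem_Ioi.mpr one_pos, rfl⟩⟩ ?_
    rintro y ⟨t, ht, rfl⟩
    exact hmax t ht
  · rw [(aux_deriv P Q a b c t0 (by linarith) (by linarith)).deriv]
    have e1 : t0 ^ (P - 1) = t0 ^ (P - 2) * t0 := by
      rw [show P - 1 = (P - 2) + 1 by ring, Real.rpow_add ht0pos, Real.rpow_one]
    have e2 : t0 ^ (Q - 1) = t0 ^ (Q - 2) * t0 := by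
      rw [show Q - 1 = (Q - 2) + 1 by ring, Real.rpow_add ht0pos, Real.rpow_one]
    rw [e1, e2]
    linear_combination t0 * hcrit
  · exact aux_deriv2 P Q a b c t0 hP hQ ht0pos hcrit hb hc
  · intro t1 ht1 hmax1
    exact aux_uniq P Q a b c t0 t1 hP hQ ht0pos ht1 hb hc hcrit
      (aux_crit P Q a b c t1 hP hQ ht1 hmax1)

private lemma part2 (P Q : ℝ) (hP : 2 < P) (hQ : 2 < Q) :
    ContinuousOn
      (fun x : ℝ × ℝ × ℝ => sSup ((fun t : ℝ =>
        x.1 * t ^ 2 - x.2.1 * t ^ P - x.2.2 * t ^ Q) '' Ioi 0))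
      (Ioi 0 ×ˢ Ioi 0 ×ˢ Ioi 0) := by
  set F : ℝ × ℝ × ℝ → ℝ := fun x => sSup ((fun t : ℝ =>
    x.1 * t ^ 2 - x.2.1 * t ^ P - x.2.2 * t ^ Q) '' Ioi 0) with hF
  intro x0 hx0
  have ha0 : 0 < x0.1 := hx0.1
  have hb0 : 0 < x0.2.1 := hx0.2.1
  have hc0 : 0 < x0.2.2 := hx0.2.2
  obtain ⟨T, hTpos, hT⟩ := aux_T P Q (x0.1 + 1) (x0.2.1 / 2) hP (by positivity)
  set E : ℝ × ℝ × ℝ → ℝ := fun x =>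
    |x.1 - x0.1| * T ^ 2 + |x.2.1 - x0.2.1| * T ^ P + |x.2.2 - x0.2.2| * T ^ Q with hE
  have hEc : Continuous E := by
    apply Continuous.add
    apply Continuous.add
    · exact ((continuous_fst.sub continuous_const).abs).mul continuous_const
    · exact (((continuous_fst.comp continuous_snd).sub continuous_const).abs).mul
        continuous_const
    · exact (((continuous_snd.comp continuous_snd).sub continuous_const).abs).mul
        continuous_const
  have hE0 : E x0 = 0 := by simp [hE]
  have hEtend : Filter.Tendsto E (nhdsWithin x0 (Ioi 0 ×ˢ Ioi 0 ×ˢ Ioi 0)) (nhds 0) := by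
    have := (hEc.continuousAt (x := x0)).continuousWithinAt
      (s := (Ioi 0 ×ˢ Ioi 0 ×ˢ Ioi 0 : Set (ℝ × ℝ × ℝ)))
    rw [ContinuousWithinAt, hE0] at this
    exact this
  have hV : ∀ᶠ x in nhdsWithin x0 (Ioi 0 ×ˢ Ioi 0 ×ˢ Ioi 0),
      x.1 < x0.1 + 1 ∧ x0.2.1 / 2 < x.2.1 := by
    apply Filter.Eventually.filter_mono nhdsWithin_le_nhds
    have hopen : IsOpen {x : ℝ × ℝ × ℝ | x.1 < x0.1 + 1 ∧ x0.2.1 / 2 < x.2.1} :=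
      (isOpen_lt continuous_fst continuous_const).inter
        (isOpen_lt continuous_const (continuous_fst.comp continuous_snd))
    exact hopen.mem_nhds ⟨by linarith, by linarith⟩
  have hmem : ∀ᶠ x in nhdsWithin x0 (Ioi 0 ×ˢ Ioi 0 ×ˢ Ioi 0),
      x ∈ (Ioi 0 ×ˢ Ioi 0 ×ˢ Ioi 0 : Set (ℝ × ℝ × ℝ)) := self_mem_nhdsWithin
  have hbound : ∀ᶠ x in nhdsWithin x0 (Ioi 0 ×ˢ Ioi 0 ×ˢ Ioi 0),
      F x0 - E x ≤ F x ∧ F x ≤ F x0 + E x := by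
    filter_upwards [hV, hmem] with x hxV hxs
    have ha : 0 < x.1 := hxs.1
    have hb : 0 < x.2.1 := hxs.2.1
    have hc : 0 < x.2.2 := hxs.2.2
    have hTx : ∀ t : ℝ, T ≤ t → x.1 * t ^ 2 - x.2.1 * t ^ P - x.2.2 * t ^ Q ≤ 0 :=
      fun t ht => hT t ht x.1 x.2.1 x.2.2 (by linarith [hxV.1]) (by linarith [hxV.2]) hc.le
    have hTx0 : ∀ t : ℝ, T ≤ t → x0.1 * t ^ 2 - x0.2.1 * t ^ P - x0.2.2 * t ^ Q ≤ 0 :=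
      fun t ht => hT t ht x0.1 x0.2.1 x0.2.2 (by linarith) (by linarith) hc0.le
    constructor
    · have := aux_le P Q T x0.1 x0.2.1 x0.2.2 x.1 x.2.1 x.2.2 hP hQ hTpos ha hb hc hTx0
      have habs : |x0.1 - x.1| = |x.1 - x0.1| := abs_sub_comm _ _
      have hbabs : |x0.2.1 - x.2.1| = |x.2.1 - x0.2.1| := abs_sub_comm _ _
      have hcabs : |x0.2.2 - x.2.2| = |x.2.2 - x0.2.2| := abs_sub_comm _ _
      rw [habs, hbabs, hcabs] at this
      simp only [hF, hE]
      linarith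
    · have := aux_le P Q T x.1 x.2.1 x.2.2 x0.1 x0.2.1 x0.2.2 hP hQ hTpos ha0 hb0 hc0 hTx
      simp only [hF, hE]
      linarith
  refine tendsto_of_tendsto_of_tendsto_of_le_of_le'
    (f := F) (g := fun x => F x0 - E x) (h := fun x => F x0 + E x) ?_ ?_
    (hbound.mono fun x h => h.1) (hbound.mono fun x h => h.2)
  · simpa using Filter.Tendsto.sub (tendsto_const_nhds (x := F x0)) hEtend
  · simpa using Filter.Tendsto.add (tendsto_const_nhds (x := F x0)) hEtend


/-- for `g(t,a,b,c) = a t² − b t^{pd/2} − c t^{qd/2}` the supremum over `t > 0`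
is attained at a unique critical point `t₀ > 0` with `∂_t g(t₀) = 0`, `∂_t² g(t₀) < 0`, and
`f(a,b,c) = sup_{t>0} g(t,a,b,c)` is continuous on `(0,∞)³`. -/
theorem stmt_1 (d : ℕ) (hd : 1 ≤ d) (p q : ℝ)
    (hp : 4 < p * (d : ℝ)) (hpq : p < q) (hq : q * ((d : ℝ) - 1) < 4) :
    (∀ a b c : ℝ, 0 < a → 0 < b → 0 < c →
      ∃ t0 : ℝ, 0 < t0 ∧
        (∀ t ∈ Ioi (0 : ℝ),
          a * t ^ 2 - b * t ^ (p * (d : ℝ) / 2) - c * t ^ (q * (d : ℝ) / 2) ≤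
            a * t0 ^ 2 - b * t0 ^ (p * (d : ℝ) / 2) - c * t0 ^ (q * (d : ℝ) / 2)) ∧
        a * t0 ^ 2 - b * t0 ^ (p * (d : ℝ) / 2) - c * t0 ^ (q * (d : ℝ) / 2) =
          sSup ((fun t : ℝ =>
            a * t ^ 2 - b * t ^ (p * (d : ℝ) / 2) - c * t ^ (q * (d : ℝ) / 2)) '' Ioi 0) ∧
        deriv (fun t : ℝ =>
          a * t ^ 2 - b * t ^ (p * (d : ℝ) / 2) - c * t ^ (q * (d : ℝ) / 2)) t0 = 0 ∧
        deriv (deriv (fun t : ℝ =>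
          a * t ^ 2 - b * t ^ (p * (d : ℝ) / 2) - c * t ^ (q * (d : ℝ) / 2))) t0 < 0 ∧
        (∀ t1 ∈ Ioi (0 : ℝ),
          (∀ t ∈ Ioi (0 : ℝ),
            a * t ^ 2 - b * t ^ (p * (d : ℝ) / 2) - c * t ^ (q * (d : ℝ) / 2) ≤
              a * t1 ^ 2 - b * t1 ^ (p * (d : ℝ) / 2) - c * t1 ^ (q * (d : ℝ) / 2)) →
          t1 = t0)) ∧
    ContinuousOn
      (fun x : ℝ × ℝ × ℝ => sSup ((fun t : ℝ =>
        x.1 * t ^ 2 - x.2.1 * t ^ (p * (d : ℝ) / 2) - x.2.2 * t ^ (q * (d : ℝ) / 2)) '' Ioi 0))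
      (Ioi 0 ×ˢ Ioi 0 ×ˢ Ioi 0) := by
  have hd1 : (1:ℝ) ≤ (d:ℝ) := by exact_mod_cast hd
  have hP : 2 < p * (d : ℝ) / 2 := by linarith
  have hPQ : p * (d : ℝ) / 2 < q * (d : ℝ) / 2 := by
    have : p * (d : ℝ) < q * (d : ℝ) := by nlinarith
    linarith
  have hQ : 2 < q * (d : ℝ) / 2 := lt_trans hP hPQ
  exact ⟨fun a b c ha hb hc => part1 _ _ hP hQ a b c ha hb hc, part2 _ _ hP hQ⟩
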